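/- Let G be a finite abelian group, g, p ∈ G, and n an integer coprime to |G|. Let x = (gp)^{n-1}g. Suppose k is an integer with both k and k−1 coprime to |G|, and let m, l be integers with mk ≡ 1 (mod |G|) and l(k−1) ≡ 1 (mod |G|). Then for every h ∈ G, setting q = (h·x^{-k})^l, one has (hq)^{m-1}·h = x. In particular, if |G| is odd, every h ∈ G mimics g. -/

import Mathlib

/-- Let `G` be a finite abelian group, `x = (gp)^(n-1)·g` with `n` coprime to `|G|`.
If `k` and `k-1` are both coprime to `|G|` and `mk ≡ 1`, `l(k-1) ≡ 1 (mod |G|)`, then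
for every `h`, with `q = (h·x^(-k))^l` one has `(hq)^(m-1)·h = x`. In particular if `|G|`
is odd then every `h` mimics `g`. -/
theorem stmt_9 {G : Type*} [CommGroup G] [Fintype G] (g p : G) (n : ℕ) (hn : 0 < n)
    (hcop : n.Coprime (Fintype.card G)) (x : G) (hx : x = (g * p) ^ (n - 1) * g) :
    (∀ k m l : ℕ, Nat.Coprime k (Fintype.card G) → Nat.Coprime (k - 1) (Fintype.card G) →
      m * k ≡ 1 [MOD Fintype.card G] → l * (k - 1) ≡ 1 [MOD Fintype.card G] →
      ∀ h : G, (h * (h * (x ^ k)⁻¹) ^ l) ^ (m - 1) * h = x) ∧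
    (Odd (Fintype.card G) → ∀ h : G, ∃ (q : G) (m : ℕ), 0 < m ∧
      Nat.Coprime m (Fintype.card G) ∧ (h * q) ^ (m - 1) * h = x) := by
  set N := Fintype.card G with hN
  have hNpos : 0 < N := Fintype.card_pos
  have hpow : ∀ (a : G) (e : ℕ), N ∣ e → a ^ e = 1 := by
    rintro a e ⟨c, rfl⟩
    rw [pow_mul, pow_card_eq_one, one_pow]
  have main : ∀ k m l : ℕ, Nat.Coprime k N → Nat.Coprime (k - 1) N →
      m * k ≡ 1 [MOD N] → l * (k - 1) ≡ 1 [MOD N] →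
      ∀ h : G, (h * (h * (x ^ k)⁻¹) ^ l) ^ (m - 1) * h = x := by
    intro k m l hk hk1 hm hl h
    rcases eq_or_lt_of_le (Nat.succ_le_of_lt hNpos) with h1 | h2
    · have : Subsingleton G := Fintype.card_le_one_iff_subsingleton.mp (by omega)
      exact Subsingleton.elim _ _
    -- N ≥ 2
    have hk2 : 2 ≤ k := by
      rcases Nat.lt_or_ge k 2 with hlt | hge
      · interval_cases k
        · simp [Nat.coprime_zero_left] at hk; omega
        · simp [Nat.coprime_zero_left] at hk1; omega
      · exact hge
    have hm1 : 1 ≤ m := by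
      by_contra hc
      have hm0 : m = 0 := by omega
      subst hm0
      rw [Nat.zero_mul] at hm
      have hd : N ∣ 1 := (Nat.modEq_iff_dvd' (by omega)).mp hm
      have := Nat.le_of_dvd one_pos hd
      omega
    obtain ⟨m', rfl⟩ : ∃ m', m = m' + 1 := ⟨m - 1, by omega⟩
    have : NeZero N := ⟨by omega⟩
    have hcast : (((k - 1 : ℕ)) : ZMod N) = (k : ZMod N) - 1 := by
      push_cast [Nat.cast_sub (by omega : 1 ≤ k)]; ring
    have hmz : ((m' : ZMod N) + 1) * k = 1 := by
      have := (ZMod.natCast_eq_natCast_iff _ _ _).mpr hm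
      push_cast at this
      linear_combination this
    have hlz : (l : ZMod N) * ((k : ZMod N) - 1) = 1 := by
      have := (ZMod.natCast_eq_natCast_iff _ _ _).mpr hl
      push_cast [hcast] at this
      linear_combination this
    have huk : IsUnit (k : ZMod N) := (ZMod.isUnit_iff_coprime k N).mpr hk
    have huk1 : IsUnit ((k : ZMod N) - 1) := by
      have := (ZMod.isUnit_iff_coprime (k - 1) N).mpr hk1
      rwa [hcast] at this
    have hE : N ∣ m' + l * m' + 1 := by
      rw [← ZMod.natCast_eq_zero_iff]
      have key : ((m' + l * m' + 1 : ℕ) : ZMod N) * ((k : ZMod N) * ((k : ZMod N) - 1)) = 0 := by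
        push_cast
        linear_combination ((k : ZMod N)) * hmz + (((m' : ZMod N) + 1) * k - k) * hlz
      rwa [(huk.mul huk1).mul_left_eq_zero] at key
    have hF : N ∣ k * l * m' + 1 := by
      rw [← ZMod.natCast_eq_zero_iff]
      have key : ((k * l * m' + 1 : ℕ) : ZMod N) * ((k : ZMod N) - 1) = 0 := by
        push_cast
        linear_combination hmz + (((m' : ZMod N) + 1) * k - k) * hlz
      rwa [huk1.mul_left_eq_zero] at key
    have hq : (h * (x ^ k)⁻¹) ^ l = h ^ l * (x ^ (k * l))⁻¹ := by
      rw [mul_pow, inv_pow, ← pow_mul]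
    have step : (h * (h ^ l * (x ^ (k * l))⁻¹)) ^ (m' + 1 - 1) * h
        = h ^ (m' + l * m' + 1) * (x ^ (k * l * m'))⁻¹ := by
      rw [Nat.add_sub_cancel, mul_pow, mul_pow, inv_pow, ← pow_mul, ← pow_mul,
        pow_add, pow_add, pow_one]
      simp [mul_comm, mul_left_comm, mul_assoc]
    rw [hq, step, hpow h _ hE, one_mul]
    have hxx : x * x ^ (k * l * m') = 1 := by
      rw [← pow_succ']
      exact hpow x _ (by simpa [Nat.add_comm] using hF)
    exact inv_eq_of_mul_eq_one_left hxx
  refine ⟨main, ?_⟩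
  intro hodd h
  obtain ⟨c, hc⟩ := hodd
  have hm2 : ((N + 1) / 2) * 2 ≡ 1 [MOD N] := by
    have he : (N + 1) / 2 * 2 = N + 1 := by omega
    rw [he]
    simpa using (Nat.add_modEq_left (n := N) (a := 1))
  refine ⟨(h * (x ^ 2)⁻¹) ^ 1, (N + 1) / 2, by omega,
    Nat.coprime_of_mul_modEq_one 2 hm2, ?_⟩
  have hl1 : (1 : ℕ) * (2 - 1) ≡ 1 [MOD N] := Nat.ModEq.refl 1
  exact main 2 ((N + 1) / 2) 1 (Nat.coprime_two_left.mpr ⟨c, hc⟩)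
    (Nat.coprime_one_left N) hm2 hl1 h
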